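/- In the group algebra ℤ[B_n], the product Ψ_1 Ψ_2 ⋯ Ψ_n equals the sum of all elements of B_n, where Ψ_1 = 1 + s_0 and Ψ_i = 1 + s_{i-1}·Ψ_{i-1} + s_{i-1}⋯s_1 s_0 s_1⋯s_{i-1} for i > 1. -/

import Mathlib

/-- The signed transposition `t_{ij}` of `ℤ`, exchanging `i ↔ j` and `-i ↔ -j`
(when `i = -j` this is the sign change negating `j`). -/
def bt (i j : ℤ) : Equiv.Perm ℤ :=
  if i = -j then Equiv.swap i j else Equiv.swap i j * Equiv.swap (-i) (-j)

/-- `w` is a signed permutation in the hyperoctahedral group `B_n`. -/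
def IsSignedPerm (n : ℕ) (w : Equiv.Perm ℤ) : Prop :=
  (∀ x : ℤ, w (-x) = -w x) ∧ ∀ x : ℤ, (n : ℤ) < |x| → w x = x

/-- The simple generators of type B: `s_0 = (-1, 1)` (sign change in position 1) and
`s_i = (i, i+1)` for `i ≥ 1`. -/
def sB : ℕ → Equiv.Perm ℤ
  | 0 => bt (-1) 1
  | i + 1 => bt (i + 1) (i + 2)

/-- `c_i = s_{i-1}⋯s_1 s_0 s_1⋯s_{i-1}`. -/
def cB : ℕ → Equiv.Perm ℤ
  | 0 => 1
  | 1 => sB 0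
  | i + 2 => sB (i + 1) * cB (i + 1) * sB (i + 1)

/-- `Ψ_i ∈ ℤ[B_n]`: `Ψ_1 = 1 + s_0` and
`Ψ_i = 1 + s_{i-1}·Ψ_{i-1} + s_{i-1}⋯s_1 s_0 s_1⋯s_{i-1}` for `i > 1`. -/
noncomputable def psiB : ℕ → MonoidAlgebra ℤ (Equiv.Perm ℤ)
  | 0 => 1
  | 1 => 1 + MonoidAlgebra.of ℤ (Equiv.Perm ℤ) (sB 0)
  | i + 2 =>
      1 + MonoidAlgebra.of ℤ (Equiv.Perm ℤ) (sB (i + 1)) * psiB (i + 1) +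
        MonoidAlgebra.of ℤ (Equiv.Perm ℤ) (cB (i + 2))

/-! ### Applying the generators -/

lemma sB_zero_apply (x : ℤ) : sB 0 x = if x = -1 then 1 else if x = 1 then -1 else x := by
  show bt (-1) 1 x = _
  rw [bt, if_pos rfl, Equiv.swap_apply_def]

lemma sB_succ_apply (i : ℕ) (x : ℤ) :
    sB (i + 1) x = if x = (i:ℤ)+1 then (i:ℤ)+2 else if x = (i:ℤ)+2 then (i:ℤ)+1
      else if x = -((i:ℤ)+1) then -((i:ℤ)+2) else if x = -((i:ℤ)+2) then -((i:ℤ)+1) else x := by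
  show bt (i+1) (i+2) x = _
  rw [bt, if_neg (by omega), Equiv.Perm.mul_apply, Equiv.swap_apply_def,
    Equiv.swap_apply_def]
  split_ifs <;> omega

lemma sB_succ_inv (i : ℕ) : (sB (i + 1))⁻¹ = sB (i + 1) := by
  apply inv_eq_of_mul_eq_one_left
  apply Equiv.ext
  intro x
  rw [Equiv.Perm.mul_apply, sB_succ_apply, sB_succ_apply, Equiv.Perm.one_apply]
  split_ifs <;> omega

lemma cB_eq (n : ℕ) : cB (n + 1) = Equiv.swap (-((n:ℤ)+1)) ((n:ℤ)+1) := by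
  induction n with
  | zero =>
    show bt (-1) 1 = _
    rw [bt, if_pos rfl]
    norm_num
  | succ i ih =>
    show sB (i+1) * cB (i+1) * sB (i+1) = _
    have h1 : sB (i+1) (-((i:ℤ)+1)) = -((i:ℤ)+2) := by rw [sB_succ_apply]; split_ifs <;> omega
    have h2 : sB (i+1) ((i:ℤ)+1) = (i:ℤ)+2 := by rw [sB_succ_apply]; split_ifs <;> omega
    calc sB (i+1) * cB (i+1) * sB (i+1)
        = sB (i+1) * Equiv.swap (-((i:ℤ)+1)) ((i:ℤ)+1) * (sB (i+1))⁻¹ := by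
          rw [ih, sB_succ_inv]
      _ = Equiv.swap (sB (i+1) (-((i:ℤ)+1))) (sB (i+1) ((i:ℤ)+1)) :=
          (Equiv.swap_apply_apply _ _ _).symm
      _ = Equiv.swap (-((↑(i+1):ℤ)+1)) ((↑(i+1):ℤ)+1) := by
          rw [h1, h2]; congr 1 <;> push_cast <;> ring

lemma cB_apply (n : ℕ) (x : ℤ) :
    cB (n + 1) x = if x = (n:ℤ)+1 then -((n:ℤ)+1) else if x = -((n:ℤ)+1) then (n:ℤ)+1 else x := by
  rw [cB_eq, Equiv.swap_apply_def]
  split_ifs <;> omega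

/-! ### Basic properties of `IsSignedPerm` -/

lemma isp_one (n : ℕ) : IsSignedPerm n 1 := ⟨fun _ => rfl, fun _ _ => rfl⟩

lemma isp_mul {n : ℕ} {u v : Equiv.Perm ℤ} (hu : IsSignedPerm n u) (hv : IsSignedPerm n v) :
    IsSignedPerm n (u * v) := by
  refine ⟨fun x => ?_, fun x hx => ?_⟩
  · simp only [Equiv.Perm.mul_apply, hv.1, hu.1]
  · simp only [Equiv.Perm.mul_apply, hv.2 x hx, hu.2 x hx]

lemma isp_inv {n : ℕ} {w : Equiv.Perm ℤ} (hw : IsSignedPerm n w) : IsSignedPerm n w⁻¹ := by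
  refine ⟨fun x => ?_, fun x hx => ?_⟩
  · apply w.injective
    rw [Equiv.Perm.coe_inv, Equiv.apply_symm_apply, hw.1, Equiv.apply_symm_apply]
  · apply w.injective
    rw [Equiv.Perm.coe_inv, Equiv.apply_symm_apply, hw.2 x hx]

lemma isp_mono {m n : ℕ} (h : m ≤ n) {w : Equiv.Perm ℤ} (hw : IsSignedPerm m w) :
    IsSignedPerm n w := by
  refine ⟨hw.1, fun x hx => hw.2 x ?_⟩
  have : (m:ℤ) ≤ n := by exact_mod_cast h
  omega

lemma isp_sB_zero : IsSignedPerm 1 (sB 0) := by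
  refine ⟨fun x => ?_, fun x hx => ?_⟩
  · rw [sB_zero_apply, sB_zero_apply]; split_ifs <;> omega
  · rcases lt_abs.mp hx with h | h <;> rw [sB_zero_apply] <;> push_cast at * <;>
      split_ifs <;> omega

lemma isp_sB_succ (i : ℕ) : IsSignedPerm (i + 2) (sB (i + 1)) := by
  refine ⟨fun x => ?_, fun x hx => ?_⟩
  · rw [sB_succ_apply, sB_succ_apply]; split_ifs <;> omega
  · rcases lt_abs.mp hx with h | h <;> rw [sB_succ_apply] <;> push_cast at * <;>
      split_ifs <;> omega

lemma isp_cB (n : ℕ) : IsSignedPerm (n + 1) (cB (n + 1)) := by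
  refine ⟨fun x => ?_, fun x hx => ?_⟩
  · rw [cB_apply, cB_apply]; split_ifs <;> omega
  · rcases lt_abs.mp hx with h | h <;> rw [cB_apply] <;> push_cast at * <;>
      split_ifs <;> omega

/-! ### Coset representatives and the enumeration of `B_n` -/

/-- The coset representatives appearing as the terms of `Ψ_n`. -/
def TB : ℕ → List (Equiv.Perm ℤ)
  | 0 => [1]
  | 1 => [1, sB 0]
  | i + 2 => 1 :: ((TB (i + 1)).map (fun t => sB (i + 1) * t)) ++ [cB (i + 2)]

/-- A list enumerating the elements of `B_n`. -/
def LB : ℕ → List (Equiv.Perm ℤ)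
  | 0 => [1]
  | n + 1 => (LB n).flatMap (fun u => (TB (n + 1)).map (fun r => u * r))

/-- The values `r⁻¹(n)` for `r ∈ TB n`. -/
def IB : ℕ → List ℤ
  | 0 => [0]
  | 1 => [1, -1]
  | i + 2 => ((i:ℤ)+2) :: IB (i + 1) ++ [-((i:ℤ)+2)]

lemma TB_isp (n : ℕ) : ∀ r ∈ TB (n + 1), IsSignedPerm (n + 1) r := by
  induction n with
  | zero =>
    intro r hr
    rcases hr with _ | ⟨_, hr⟩
    · exact isp_one 1
    · rcases hr with _ | ⟨_, hr⟩
      · exact isp_sB_zero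
      · cases hr
  | succ i ih =>
    intro r hr
    simp only [TB, List.mem_cons, List.mem_append, List.mem_map, List.mem_singleton,
      List.not_mem_nil, or_false] at hr
    rcases hr with (rfl | ⟨t, ht, rfl⟩) | rfl
    · exact isp_one _
    · exact isp_mul (isp_mono (by omega) (isp_sB_succ i)) (isp_mono (by omega) (ih t ht))
    · exact isp_cB _

lemma inv_apply_of {w : Equiv.Perm ℤ} {x y : ℤ} (h : w x = y) : w⁻¹ y = x := by
  rw [← h, Equiv.Perm.coe_inv, Equiv.symm_apply_apply]

lemma TB_map_inv (n : ℕ) :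
    (TB (n + 1)).map (fun r => r⁻¹ ((n:ℤ) + 1)) = IB (n + 1) := by
  induction n with
  | zero =>
    show [(1 : Equiv.Perm ℤ)⁻¹ (((0:ℕ):ℤ)+1), (sB 0)⁻¹ (((0:ℕ):ℤ)+1)] = [1, -1]
    have hh : (sB 0)⁻¹ (1:ℤ) = -1 := inv_apply_of (by rw [sB_zero_apply]; norm_num)
    norm_num [hh]
  | succ i ih =>
    have h1 : (1 : Equiv.Perm ℤ)⁻¹ ((↑(i+1):ℤ)+1) = (i:ℤ)+2 := by
      rw [inv_one, Equiv.Perm.one_apply]; push_cast; ring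
    have h2 : (cB (i+2))⁻¹ ((↑(i+1):ℤ)+1) = -((i:ℤ)+2) := by
      apply inv_apply_of
      show cB ((i+1)+1) _ = _
      rw [cB_apply]
      push_cast
      split_ifs <;> omega
    have h3 : ∀ t ∈ TB (i+1), ((fun r => r⁻¹ ((↑(i+1):ℤ)+1)) ∘ (fun t => sB (i+1) * t)) t
        = t⁻¹ ((i:ℤ)+1) := by
      intro t _
      simp only [Function.comp_apply, mul_inv_rev, Equiv.Perm.mul_apply]
      congr 1
      apply inv_apply_of
      rw [sB_succ_apply]
      push_cast
      split_ifs <;> omega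
    show ((1 : Equiv.Perm ℤ)⁻¹ ((↑(i+1):ℤ)+1)) ::
        ((TB (i+1)).map (fun t => sB (i+1) * t) ++ [cB (i+2)]).map (fun r => r⁻¹ ((↑(i+1):ℤ)+1))
        = ((i:ℤ)+2) :: (IB (i + 1) ++ [-((i:ℤ)+2)])
    rw [h1, List.map_append, List.map_map, List.map_congr_left h3, ih]
    show ((i:ℤ)+2) :: (IB (i+1) ++ [(cB (i+2))⁻¹ ((↑(i+1):ℤ)+1)]) = _
    rw [h2]

lemma IB_bound (n : ℕ) : ∀ v ∈ IB (n + 1), 0 < |v| ∧ |v| ≤ (n:ℤ) + 1 := by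
  induction n with
  | zero =>
    intro v hv
    rcases hv with _ | ⟨_, hv⟩
    · norm_num
    · rcases hv with _ | ⟨_, hv⟩
      · norm_num
      · cases hv
  | succ i ih =>
    intro v hv
    simp only [IB, List.mem_cons, List.mem_append, List.mem_singleton,
      List.not_mem_nil, or_false] at hv
    rcases hv with (rfl | hv) | rfl
    · refine ⟨abs_pos.mpr (by omega), ?_⟩
      rw [abs_of_pos (by positivity)]
      push_cast
      omega
    · have := ih v hv
      push_cast
      omega
    · refine ⟨abs_pos.mpr (by omega), ?_⟩
      rw [abs_neg, abs_of_pos (by positivity)]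
      push_cast
      omega

lemma IB_nodup (n : ℕ) : (IB (n + 1)).Nodup := by
  induction n with
  | zero => show List.Nodup [1, -1]; norm_num
  | succ i ih =>
    show (((i:ℤ)+2) :: (IB (i + 1) ++ [-((i:ℤ)+2)])).Nodup
    have hb := IB_bound i
    rw [List.nodup_cons, List.nodup_append]
    refine ⟨?_, ih, by norm_num, ?_⟩
    · intro h
      rcases List.mem_append.mp h with h | h
      · have := (hb _ h).2
        rw [abs_of_pos (by positivity)] at this
        omega
      · rw [List.mem_singleton] at h; omega
    · intro v hv
      simp only [List.mem_singleton, forall_eq, ne_eq]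
      have := (hb _ hv).2
      intro h
      subst h
      rw [abs_neg, abs_of_pos (by positivity)] at this
      omega

lemma IB_mem (n : ℕ) (k : ℤ) (h1 : 0 < |k|) (h2 : |k| ≤ (n:ℤ) + 1) : k ∈ IB (n + 1) := by
  induction n with
  | zero =>
    have : k = 1 ∨ k = -1 := by
      rcases abs_cases k with ⟨he, _⟩ | ⟨he, _⟩ <;> omega
    rcases this with rfl | rfl <;> simp [IB]
  | succ i ih =>
    show k ∈ ((i:ℤ)+2) :: (IB (i + 1) ++ [-((i:ℤ)+2)])
    rw [List.mem_cons, List.mem_append, List.mem_singleton]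
    push_cast at h2
    by_cases hk : |k| ≤ (i:ℤ) + 1
    · exact Or.inr (Or.inl (ih hk))
    · rcases abs_cases k with ⟨he, _⟩ | ⟨he, _⟩
      · left; omega
      · right; right; omega

/-! ### `Ψ` as a sum over `TB` -/

lemma psiB_sum (n : ℕ) :
    psiB (n + 1) = ((TB (n + 1)).map (MonoidAlgebra.of ℤ (Equiv.Perm ℤ))).sum := by
  induction n with
  | zero =>
    show 1 + MonoidAlgebra.of ℤ (Equiv.Perm ℤ) (sB 0)
        = MonoidAlgebra.of ℤ (Equiv.Perm ℤ) 1 + (MonoidAlgebra.of ℤ (Equiv.Perm ℤ) (sB 0) + 0)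
    rw [map_one, add_zero]
  | succ i ih =>
    have hmap : (TB (i+1)).map ((MonoidAlgebra.of ℤ (Equiv.Perm ℤ)) ∘ (fun t => sB (i+1) * t))
        = (TB (i+1)).map (fun t => MonoidAlgebra.of ℤ (Equiv.Perm ℤ) (sB (i+1)) *
            MonoidAlgebra.of ℤ (Equiv.Perm ℤ) t) :=
      List.map_congr_left (fun t _ => by simp [map_mul])
    have key : (((TB (i+1)).map (fun t => sB (i+1) * t) ++ [cB (i+2)]).map
        (MonoidAlgebra.of ℤ (Equiv.Perm ℤ))).sum
        = MonoidAlgebra.of ℤ (Equiv.Perm ℤ) (sB (i+1)) * psiB (i+1)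
          + MonoidAlgebra.of ℤ (Equiv.Perm ℤ) (cB (i+2)) := by
      rw [List.map_append, List.sum_append, List.map_map, hmap, List.sum_map_mul_left, ← ih]
      simp
    show 1 + MonoidAlgebra.of ℤ (Equiv.Perm ℤ) (sB (i+1)) * psiB (i+1) +
        MonoidAlgebra.of ℤ (Equiv.Perm ℤ) (cB (i+2)) =
      ((MonoidAlgebra.of ℤ (Equiv.Perm ℤ) 1) ::
        (((TB (i+1)).map (fun t => sB (i+1) * t) ++ [cB (i+2)]).map
          (MonoidAlgebra.of ℤ (Equiv.Perm ℤ)))).sum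
    rw [List.sum_cons, key, map_one]
    exact add_assoc _ _ _

/-! ### The decomposition `w = u · r` -/

lemma decomp_val {n : ℕ} {u r : Equiv.Perm ℤ} (hu : IsSignedPerm n u) :
    (u * r)⁻¹ ((n:ℤ) + 1) = r⁻¹ ((n:ℤ) + 1) := by
  have h : u⁻¹ ((n:ℤ)+1) = (n:ℤ)+1 := (isp_inv hu).2 _ (by rw [abs_of_pos] <;> omega)
  rw [mul_inv_rev, Equiv.Perm.mul_apply, h]

lemma decomp_unique {n : ℕ} {u₁ u₂ r₁ r₂ : Equiv.Perm ℤ}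
    (hu₁ : IsSignedPerm n u₁) (hu₂ : IsSignedPerm n u₂)
    (hr₁ : r₁ ∈ TB (n + 1)) (hr₂ : r₂ ∈ TB (n + 1))
    (h : u₁ * r₁ = u₂ * r₂) : u₁ = u₂ ∧ r₁ = r₂ := by
  have hv : r₁⁻¹ ((n:ℤ)+1) = r₂⁻¹ ((n:ℤ)+1) := by
    have e1 := decomp_val (r := r₁) hu₁
    have e2 := decomp_val (r := r₂) hu₂
    rw [← e1, ← e2, h]
  have hnd : ((TB (n + 1)).map (fun r => r⁻¹ ((n:ℤ) + 1))).Nodup := by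
    rw [TB_map_inv]; exact IB_nodup n
  have hr : r₁ = r₂ := List.inj_on_of_nodup_map hnd hr₁ hr₂ hv
  subst hr
  exact ⟨mul_right_cancel h, rfl⟩

lemma LB_isp (n : ℕ) : ∀ u ∈ LB n, IsSignedPerm n u := by
  induction n with
  | zero =>
    intro u hu
    rcases hu with _ | ⟨_, hu⟩
    · exact isp_one 0
    · cases hu
  | succ i ih =>
    intro u hu
    simp only [LB, List.mem_flatMap, List.mem_map] at hu
    obtain ⟨v, hv, r, hr, rfl⟩ := hu
    exact isp_mul (isp_mono (by omega) (ih v hv)) (TB_isp i r hr)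

lemma LB_nodup (n : ℕ) : (LB n).Nodup := by
  induction n with
  | zero => show List.Nodup [1]; norm_num
  | succ i ih =>
    show ((LB i).flatMap (fun u => (TB (i + 1)).map (fun r => u * r))).Nodup
    rw [List.nodup_flatMap]
    have hTnd : (TB (i + 1)).Nodup := by
      apply List.Nodup.of_map (fun r => r⁻¹ ((i:ℤ) + 1))
      rw [TB_map_inv]; exact IB_nodup i
    constructor
    · intro u _
      exact hTnd.map (mul_right_injective u)
    · apply List.Pairwise.imp_of_mem ?_ ih
      intro u₁ u₂ h₁ h₂ hne
      intro w hw₁ hw₂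
      simp only [List.mem_map] at hw₁ hw₂
      obtain ⟨r₁, hr₁, rfl⟩ := hw₁
      obtain ⟨r₂, hr₂, he⟩ := hw₂
      exact hne (decomp_unique (LB_isp i u₂ h₂) (LB_isp i u₁ h₁) hr₂ hr₁ he).1.symm

lemma LB_complete (n : ℕ) : ∀ w : Equiv.Perm ℤ, IsSignedPerm n w → w ∈ LB n := by
  induction n with
  | zero =>
    intro w hw
    have hw1 : w = 1 := by
      apply Equiv.ext
      intro x
      rcases eq_or_ne x 0 with rfl | hx
      · have := hw.1 0
        simp only [neg_zero] at this
        simpa using by omega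
      · exact hw.2 x (by simpa using abs_pos.mpr hx)
    rw [hw1]
    exact List.mem_singleton.mpr rfl
  | succ i ih =>
    intro w hw
    set k := w⁻¹ ((i:ℤ)+1) with hk
    have hwk : w k = (i:ℤ)+1 := Equiv.apply_symm_apply w _
    have hk0 : k ≠ 0 := by
      intro h
      have h0 : w 0 = 0 := by have := hw.1 0; simp only [neg_zero] at this; omega
      rw [h, h0] at hwk
      omega
    have hkb : |k| ≤ (i:ℤ) + 1 := by
      by_contra hb
      push_neg at hb
      have := hw.2 k (by push_cast; omega)
      rw [this] at hwk
      rcases abs_cases k with ⟨he, _⟩ | ⟨he, _⟩ <;> omega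
    have hkm : k ∈ IB (i + 1) := IB_mem i k (abs_pos.mpr hk0) hkb
    rw [← TB_map_inv, List.mem_map] at hkm
    obtain ⟨r, hr, hrk⟩ := hkm
    have hrsp := TB_isp i r hr
    have hrisp := isp_inv hrsp
    set u := w * r⁻¹ with hu
    have husp : IsSignedPerm i u := by
      refine ⟨fun x => ?_, fun x hx => ?_⟩
      · simp only [hu, Equiv.Perm.mul_apply, hrisp.1, hw.1]
      · rcases eq_or_ne x ((i:ℤ)+1) with rfl | hx1
        · simp only [hu, Equiv.Perm.mul_apply]
          rw [hrk, hwk]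
        · rcases eq_or_ne x (-((i:ℤ)+1)) with rfl | hx2
          · simp only [hu, Equiv.Perm.mul_apply]
            have : r⁻¹ (-((i:ℤ)+1)) = -k := by rw [hrisp.1, hrk]
            rw [this, hw.1, hwk]
          · have hxb : (↑(i+1):ℤ) < |x| := by
              push_cast
              rcases abs_cases x with ⟨he, _⟩ | ⟨he, _⟩ <;> omega
            simp only [hu, Equiv.Perm.mul_apply]
            rw [hrisp.2 x hxb, hw.2 x hxb]
    have hw' : w = u * r := by rw [hu, inv_mul_cancel_right]
    rw [hw']
    show u * r ∈ (LB i).flatMap (fun u => (TB (i + 1)).map (fun r => u * r))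
    rw [List.mem_flatMap]
    exact ⟨u, ih u husp, List.mem_map.mpr ⟨r, hr, rfl⟩⟩

/-! ### The product formula -/

lemma prod_psi_eq (n : ℕ) :
    ((List.range n).map fun i => psiB (i + 1)).prod
      = ((LB n).map (MonoidAlgebra.of ℤ (Equiv.Perm ℤ))).sum := by
  induction n with
  | zero => simp [LB, MonoidAlgebra.one_def]
  | succ i ih =>
    rw [List.range_succ, List.map_append, List.prod_append, ih]
    simp only [List.map_cons, List.map_nil, List.prod_cons, List.prod_nil, mul_one]
    rw [psiB_sum]
    show _ = (((LB i).flatMap fun u => (TB (i + 1)).map fun r => u * r).map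
        (MonoidAlgebra.of ℤ (Equiv.Perm ℤ))).sum
    rw [List.map_flatMap, List.flatMap, List.sum_flatten, List.map_map,
      ← List.sum_map_mul_right]
    apply congrArg
    apply List.map_congr_left
    intro u _
    simp only [Function.comp_apply, List.map_map]
    have hm : (TB (i+1)).map ((MonoidAlgebra.of ℤ (Equiv.Perm ℤ)) ∘ fun r => u * r)
        = (TB (i+1)).map (fun r => MonoidAlgebra.of ℤ (Equiv.Perm ℤ) u *
            MonoidAlgebra.of ℤ (Equiv.Perm ℤ) r) :=
      List.map_congr_left (fun r _ => by simp [map_mul])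
    rw [hm, List.sum_map_mul_left]

/-- In `ℤ[B_n]`, `Ψ_1 Ψ_2 ⋯ Ψ_n` equals the sum of all elements of `B_n`. -/
theorem psi_factorization_B (n : ℕ) :
    ((List.range n).map fun i => psiB (i + 1)).prod =
      ∑ᶠ w ∈ {w : Equiv.Perm ℤ | IsSignedPerm n w},
        MonoidAlgebra.of ℤ (Equiv.Perm ℤ) w := by
  classical
  have hset : {w : Equiv.Perm ℤ | IsSignedPerm n w} = ((LB n).toFinset : Set (Equiv.Perm ℤ)) := by
    ext w
    simp only [Set.mem_setOf_eq, Finset.coe_sort_coe, Finset.mem_coe, List.mem_toFinset]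
    exact ⟨LB_complete n w, fun h => LB_isp n w h⟩
  rw [hset, finsum_mem_coe_finset, List.sum_toFinset _ (LB_nodup n), prod_psi_eq]
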